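/- With $\alpha_0 = 753/1000$ and $\theta_0 = 3/4$, one has $L_{\alpha_0}(\theta_0) = \theta_0\int_0^1 e^{-2\theta_0 u}(1-u)^{-\alpha_0}du > 1$. -/

import Mathlib

open Real

private lemma ladder {f g f' g' : ℝ → ℝ}
    (hf : ∀ x, HasDerivAt f (f' x) x) (hg : ∀ x, HasDerivAt g (g' x) x)
    (h0 : f 0 ≤ g 0) (hd : ∀ x, 0 ≤ x → f' x ≤ g' x) (x : ℝ) (hx : 0 ≤ x) :
    f x ≤ g x := by
  have hmono : MonotoneOn (fun y => g y - f y) (Set.Ici (0:ℝ)) := by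
    apply monotoneOn_of_deriv_nonneg (convex_Ici 0)
    · exact fun y _ => ((hg y).sub (hf y)).continuousAt.continuousWithinAt
    · exact fun y _ => ((hg y).sub (hf y)).differentiableAt.differentiableWithinAt
    · intro y hy
      rw [interior_Ici] at hy
      rw [show (fun y => g y - f y) = g - f from rfl, ((hg y).sub (hf y)).deriv]
      have := hd y (le_of_lt hy)
      linarith
  have h := hmono Set.self_mem_Ici (Set.mem_Ici.mpr hx) hx
  simp only at h
  linarith

private lemma dExp (x : ℝ) : HasDerivAt (fun y : ℝ => Real.exp (-y)) (-Real.exp (-x)) x := by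
  have h : HasDerivAt (fun y : ℝ => Real.exp (-y)) (Real.exp (-x) * -1) x :=
    (Real.hasDerivAt_exp (-x)).comp x (hasDerivAt_neg (x := x))
  convert h using 1
  ring

private lemma dP2 (x : ℝ) :
    HasDerivAt (fun y : ℝ => 1 - y + y^2/2) (-(1 - x)) x := by
  have h : HasDerivAt (fun y : ℝ => 1 - y + y^2/2)
      ((0 - 1) + ((2:ℕ) * x ^ (2-1))/2) x :=
    ((hasDerivAt_const x (1:ℝ)).sub (hasDerivAt_id x)).add ((hasDerivAt_pow 2 x).div_const 2)
  convert h using 1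
  push_cast
  ring

private lemma dP3 (x : ℝ) :
    HasDerivAt (fun y : ℝ => 1 - y + y^2/2 - y^3/6) (-(1 - x + x^2/2)) x := by
  have h : HasDerivAt (fun y : ℝ => 1 - y + y^2/2 - y^3/6)
      (((0 - 1) + ((2:ℕ) * x ^ (2-1))/2) - ((3:ℕ) * x ^ (3-1))/6) x :=
    (((hasDerivAt_const x (1:ℝ)).sub (hasDerivAt_id x)).add
      ((hasDerivAt_pow 2 x).div_const 2)).sub ((hasDerivAt_pow 3 x).div_const 6)
  convert h using 1
  push_cast
  ring

private lemma dP4 (x : ℝ) :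
    HasDerivAt (fun y : ℝ => 1 - y + y^2/2 - y^3/6 + y^4/24)
      (-(1 - x + x^2/2 - x^3/6)) x := by
  have h : HasDerivAt (fun y : ℝ => 1 - y + y^2/2 - y^3/6 + y^4/24)
      ((((0 - 1) + ((2:ℕ) * x ^ (2-1))/2) - ((3:ℕ) * x ^ (3-1))/6) +
        ((4:ℕ) * x ^ (4-1))/24) x :=
    ((((hasDerivAt_const x (1:ℝ)).sub (hasDerivAt_id x)).add
      ((hasDerivAt_pow 2 x).div_const 2)).sub ((hasDerivAt_pow 3 x).div_const 6)).add
      ((hasDerivAt_pow 4 x).div_const 24)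
  convert h using 1
  push_cast
  ring

private lemma dP5 (x : ℝ) :
    HasDerivAt (fun y : ℝ => 1 - y + y^2/2 - y^3/6 + y^4/24 - y^5/120)
      (-(1 - x + x^2/2 - x^3/6 + x^4/24)) x := by
  have h : HasDerivAt (fun y : ℝ => 1 - y + y^2/2 - y^3/6 + y^4/24 - y^5/120)
      (((((0 - 1) + ((2:ℕ) * x ^ (2-1))/2) - ((3:ℕ) * x ^ (3-1))/6) +
        ((4:ℕ) * x ^ (4-1))/24) - ((5:ℕ) * x ^ (5-1))/120) x :=
    (((((hasDerivAt_const x (1:ℝ)).sub (hasDerivAt_id x)).add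
      ((hasDerivAt_pow 2 x).div_const 2)).sub ((hasDerivAt_pow 3 x).div_const 6)).add
      ((hasDerivAt_pow 4 x).div_const 24)).sub ((hasDerivAt_pow 5 x).div_const 120)
  convert h using 1
  push_cast
  ring

private lemma dP6 (x : ℝ) :
    HasDerivAt (fun y : ℝ => 1 - y + y^2/2 - y^3/6 + y^4/24 - y^5/120 + y^6/720)
      (-(1 - x + x^2/2 - x^3/6 + x^4/24 - x^5/120)) x := by
  have h : HasDerivAt (fun y : ℝ => 1 - y + y^2/2 - y^3/6 + y^4/24 - y^5/120 + y^6/720)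
      ((((((0 - 1) + ((2:ℕ) * x ^ (2-1))/2) - ((3:ℕ) * x ^ (3-1))/6) +
        ((4:ℕ) * x ^ (4-1))/24) - ((5:ℕ) * x ^ (5-1))/120) + ((6:ℕ) * x ^ (6-1))/720) x :=
    ((((((hasDerivAt_const x (1:ℝ)).sub (hasDerivAt_id x)).add
      ((hasDerivAt_pow 2 x).div_const 2)).sub ((hasDerivAt_pow 3 x).div_const 6)).add
      ((hasDerivAt_pow 4 x).div_const 24)).sub ((hasDerivAt_pow 5 x).div_const 120)).add
      ((hasDerivAt_pow 6 x).div_const 720)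
  convert h using 1
  push_cast
  ring

private lemma dP7 (x : ℝ) :
    HasDerivAt (fun y : ℝ => 1 - y + y^2/2 - y^3/6 + y^4/24 - y^5/120 + y^6/720 - y^7/5040)
      (-(1 - x + x^2/2 - x^3/6 + x^4/24 - x^5/120 + x^6/720)) x := by
  have h : HasDerivAt
      (fun y : ℝ => 1 - y + y^2/2 - y^3/6 + y^4/24 - y^5/120 + y^6/720 - y^7/5040)
      (((((((0 - 1) + ((2:ℕ) * x ^ (2-1))/2) - ((3:ℕ) * x ^ (3-1))/6) +
        ((4:ℕ) * x ^ (4-1))/24) - ((5:ℕ) * x ^ (5-1))/120) + ((6:ℕ) * x ^ (6-1))/720) -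
        ((7:ℕ) * x ^ (7-1))/5040) x :=
    (((((((hasDerivAt_const x (1:ℝ)).sub (hasDerivAt_id x)).add
      ((hasDerivAt_pow 2 x).div_const 2)).sub ((hasDerivAt_pow 3 x).div_const 6)).add
      ((hasDerivAt_pow 4 x).div_const 24)).sub ((hasDerivAt_pow 5 x).div_const 120)).add
      ((hasDerivAt_pow 6 x).div_const 720)).sub ((hasDerivAt_pow 7 x).div_const 5040)
  convert h using 1
  push_cast
  ring

private lemma L1 (x : ℝ) (_ : 0 ≤ x) : 1 - x ≤ Real.exp (-x) := by
  have := Real.add_one_le_exp (-x); linarith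

private lemma L2 (x : ℝ) (hx : 0 ≤ x) : Real.exp (-x) ≤ 1 - x + x^2/2 :=
  ladder dExp dP2 (by simp) (fun y hy => by have := L1 y hy; linarith) x hx

private lemma L3 (x : ℝ) (hx : 0 ≤ x) : 1 - x + x^2/2 - x^3/6 ≤ Real.exp (-x) :=
  ladder dP3 dExp (by simp) (fun y hy => by have := L2 y hy; linarith) x hx

private lemma L4 (x : ℝ) (hx : 0 ≤ x) :
    Real.exp (-x) ≤ 1 - x + x^2/2 - x^3/6 + x^4/24 :=
  ladder dExp dP4 (by simp) (fun y hy => by have := L3 y hy; linarith) x hx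

private lemma L5 (x : ℝ) (hx : 0 ≤ x) :
    1 - x + x^2/2 - x^3/6 + x^4/24 - x^5/120 ≤ Real.exp (-x) :=
  ladder dP5 dExp (by simp) (fun y hy => by have := L4 y hy; linarith) x hx

private lemma L6 (x : ℝ) (hx : 0 ≤ x) :
    Real.exp (-x) ≤ 1 - x + x^2/2 - x^3/6 + x^4/24 - x^5/120 + x^6/720 :=
  ladder dExp dP6 (by simp) (fun y hy => by have := L5 y hy; linarith) x hx

private lemma L7 (x : ℝ) (hx : 0 ≤ x) :
    1 - x + x^2/2 - x^3/6 + x^4/24 - x^5/120 + x^6/720 - x^7/5040 ≤ Real.exp (-x) :=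
  ladder dP7 dExp (by simp) (fun y hy => by have := L6 y hy; linarith) x hx

/-- the explicit polynomial lower bound `P7(3/2 · u)` for `exp(-3/2 u)` -/
noncomputable def Qpoly (u : ℝ) : ℝ :=
  1 - 3/2*u + 9/8*u^2 - 9/16*u^3 + 27/128*u^4 - 81/1280*u^5 + 81/5120*u^6 - 2187/645120*u^7

private lemma Qpoly_le (u : ℝ) (hu : 0 ≤ u) :
    Qpoly u ≤ Real.exp (-2 * (3/4 : ℝ) * u) := by
  have h7 := L7 (3/2*u) (by linarith)
  have e : -2 * (3/4 : ℝ) * u = -(3/2*u) := by ring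
  rw [e]
  calc Qpoly u
      = 1 - (3/2*u) + (3/2*u)^2/2 - (3/2*u)^3/6 + (3/2*u)^4/24 - (3/2*u)^5/120 +
        (3/2*u)^6/720 - (3/2*u)^7/5040 := by unfold Qpoly; ring
    _ ≤ Real.exp (-(3/2*u)) := h7

/-- with `α₀ = 753/1000` and `θ₀ = 3/4`, `L_{α₀}(θ₀) > 1`. -/
theorem L_above_one :
    1 < (3 / 4 : ℝ) *
      ∫ u in (0 : ℝ)..1,
        Real.exp (-2 * (3 / 4 : ℝ) * u) * (1 - u) ^ (-(753 / 1000 : ℝ)) := by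
  -- integrability of the weight
  have hr : IntervalIntegrable (fun v : ℝ => v ^ (-(753/1000 : ℝ))) MeasureTheory.volume 0 1 :=
    intervalIntegral.intervalIntegrable_rpow' (by norm_num)
  have hr1 : IntervalIntegrable (fun u : ℝ => (1 - u) ^ (-(753/1000 : ℝ)))
      MeasureTheory.volume 0 1 := by
    simpa using (hr.comp_sub_left 1).symm
  have hfint : IntervalIntegrable
      (fun u : ℝ => Real.exp (-2 * (3/4 : ℝ) * u) * (1 - u) ^ (-(753/1000 : ℝ)))
      MeasureTheory.volume 0 1 :=
    hr1.continuousOn_mul (by fun_prop)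
  have hQint : IntervalIntegrable
      (fun u : ℝ => Qpoly u * (1 - u) ^ (-(753/1000 : ℝ)))
      MeasureTheory.volume 0 1 :=
    hr1.continuousOn_mul (by unfold Qpoly; fun_prop)
  -- step 1 : the polynomial integral is a lower bound
  have hmono : (∫ u in (0:ℝ)..1, Qpoly u * (1 - u) ^ (-(753/1000 : ℝ))) ≤
      ∫ u in (0:ℝ)..1, Real.exp (-2 * (3/4 : ℝ) * u) * (1 - u) ^ (-(753/1000 : ℝ)) := by
    apply intervalIntegral.integral_mono_on (by norm_num) hQint hfint
    intro u hu
    exact mul_le_mul_of_nonneg_right (Qpoly_le u hu.1)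
      (Real.rpow_nonneg (by linarith [hu.2]) _)
  -- step 2 : compute the polynomial integral
  have hflip : (∫ u in (0:ℝ)..1, Qpoly u * (1 - u) ^ (-(753/1000 : ℝ))) =
      ∫ v in (0:ℝ)..1, Qpoly (1 - v) * v ^ (-(753/1000 : ℝ)) := by
    have h := intervalIntegral.integral_comp_sub_left (a := (0:ℝ)) (b := 1)
      (fun v => Qpoly (1 - v) * v ^ (-(753/1000 : ℝ))) 1
    simp only [sub_sub_cancel, sub_zero, sub_self] at h
    exact h
  have hcongr : (∫ v in (0:ℝ)..1, Qpoly (1 - v) * v ^ (-(753/1000 : ℝ))) =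
      ∫ v in (0:ℝ)..1,
        (3191/14336 * v ^ (-(753/1000 : ℝ)) + (3471/10240 * v ^ ((247:ℝ)/1000) +
         (2421/10240 * v ^ ((1247:ℝ)/1000) + (315/2048 * v ^ ((2247:ℝ)/1000) +
         (27/2048 * v ^ ((3247:ℝ)/1000) + (81/2048 * v ^ ((4247:ℝ)/1000) +
         (-81/10240 * v ^ ((5247:ℝ)/1000) + 243/71680 * v ^ ((6247:ℝ)/1000)))))))) := by
    apply intervalIntegral.integral_congr
    intro v hv
    dsimp only
    have hv0 : (0:ℝ) ≤ v := by
      rcases hv with ⟨h1, h2⟩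
      simp [Set.uIcc_of_le (show (0:ℝ) ≤ 1 by norm_num)] at *
      linarith [h1]
    rcases eq_or_lt_of_le hv0 with h | h
    · rw [← h]
      norm_num [Real.zero_rpow]
    · have ek : ∀ k : ℕ, v ^ ((k:ℝ) + -(753/1000)) = v ^ k * v ^ (-(753/1000:ℝ)) := by
        intro k
        rw [Real.rpow_add h, Real.rpow_natCast]
      have e1 : v ^ ((247:ℝ)/1000) = v ^ (1:ℕ) * v ^ (-(753/1000:ℝ)) := by
        rw [← ek 1]; norm_num
      have e2 : v ^ ((1247:ℝ)/1000) = v ^ (2:ℕ) * v ^ (-(753/1000:ℝ)) := by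
        rw [← ek 2]; norm_num
      have e3 : v ^ ((2247:ℝ)/1000) = v ^ (3:ℕ) * v ^ (-(753/1000:ℝ)) := by
        rw [← ek 3]; norm_num
      have e4 : v ^ ((3247:ℝ)/1000) = v ^ (4:ℕ) * v ^ (-(753/1000:ℝ)) := by
        rw [← ek 4]; norm_num
      have e5 : v ^ ((4247:ℝ)/1000) = v ^ (5:ℕ) * v ^ (-(753/1000:ℝ)) := by
        rw [← ek 5]; norm_num
      have e6 : v ^ ((5247:ℝ)/1000) = v ^ (6:ℕ) * v ^ (-(753/1000:ℝ)) := by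
        rw [← ek 6]; norm_num
      have e7 : v ^ ((6247:ℝ)/1000) = v ^ (7:ℕ) * v ^ (-(753/1000:ℝ)) := by
        rw [← ek 7]; norm_num
      rw [e1, e2, e3, e4, e5, e6, e7]
      unfold Qpoly
      ring
  -- integrability of each piece
  have ik : ∀ (r c : ℝ), -1 < r →
      IntervalIntegrable (fun v : ℝ => c * v ^ r) MeasureTheory.volume 0 1 := by
    intro r c hrgt
    exact (intervalIntegral.intervalIntegrable_rpow' hrgt).const_mul c
  have i0 := ik (-(753/1000)) (3191/14336) (by norm_num)
  have i1 := ik ((247:ℝ)/1000) (3471/10240) (by norm_num)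
  have i2 := ik ((1247:ℝ)/1000) (2421/10240) (by norm_num)
  have i3 := ik ((2247:ℝ)/1000) (315/2048) (by norm_num)
  have i4 := ik ((3247:ℝ)/1000) (27/2048) (by norm_num)
  have i5 := ik ((4247:ℝ)/1000) (81/2048) (by norm_num)
  have i6 := ik ((5247:ℝ)/1000) (-81/10240) (by norm_num)
  have i7 := ik ((6247:ℝ)/1000) (243/71680) (by norm_num)
  have s7 := i7
  have s6 := i6.add s7
  have s5 := i5.add s6
  have s4 := i4.add s5
  have s3 := i3.add s4
  have s2 := i2.add s3
  have s1 := i1.add s2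
  -- value of the basic integrals
  have val : ∀ r : ℝ, 0 < r + 1 → (∫ v in (0:ℝ)..1, v ^ r) = 1/(r+1) := by
    intro r hrpos
    rw [integral_rpow (Or.inl (by linarith))]
    rw [Real.one_rpow, Real.zero_rpow (by linarith)]
    ring
  have hval : (∫ v in (0:ℝ)..1,
        (3191/14336 * v ^ (-(753/1000 : ℝ)) + (3471/10240 * v ^ ((247:ℝ)/1000) +
         (2421/10240 * v ^ ((1247:ℝ)/1000) + (315/2048 * v ^ ((2247:ℝ)/1000) +
         (27/2048 * v ^ ((3247:ℝ)/1000) + (81/2048 * v ^ ((4247:ℝ)/1000) +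
         (-81/10240 * v ^ ((5247:ℝ)/1000) + 243/71680 * v ^ ((6247:ℝ)/1000))))))))) =
      3191/14336 * (1/(-(753/1000) + 1)) + (3471/10240 * (1/((247:ℝ)/1000 + 1)) +
      (2421/10240 * (1/((1247:ℝ)/1000 + 1)) + (315/2048 * (1/((2247:ℝ)/1000 + 1)) +
      (27/2048 * (1/((3247:ℝ)/1000 + 1)) + (81/2048 * (1/((4247:ℝ)/1000 + 1)) +
      (-81/10240 * (1/((5247:ℝ)/1000 + 1)) + 243/71680 * (1/((6247:ℝ)/1000 + 1)))))))) := by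
    rw [intervalIntegral.integral_add i0 s1, intervalIntegral.integral_add i1 s2,
      intervalIntegral.integral_add i2 s3, intervalIntegral.integral_add i3 s4,
      intervalIntegral.integral_add i4 s5, intervalIntegral.integral_add i5 s6,
      intervalIntegral.integral_add i6 s7]
    rw [intervalIntegral.integral_const_mul, intervalIntegral.integral_const_mul,
      intervalIntegral.integral_const_mul, intervalIntegral.integral_const_mul,
      intervalIntegral.integral_const_mul, intervalIntegral.integral_const_mul,
      intervalIntegral.integral_const_mul, intervalIntegral.integral_const_mul]
    rw [val (-(753/1000)) (by norm_num), val ((247:ℝ)/1000) (by norm_num),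
      val ((1247:ℝ)/1000) (by norm_num), val ((2247:ℝ)/1000) (by norm_num),
      val ((3247:ℝ)/1000) (by norm_num), val ((4247:ℝ)/1000) (by norm_num),
      val ((5247:ℝ)/1000) (by norm_num), val ((6247:ℝ)/1000) (by norm_num)]
  have hnum : (4:ℝ)/3 <
      3191/14336 * (1/(-(753/1000) + 1)) + (3471/10240 * (1/((247:ℝ)/1000 + 1)) +
      (2421/10240 * (1/((1247:ℝ)/1000 + 1)) + (315/2048 * (1/((2247:ℝ)/1000 + 1)) +
      (27/2048 * (1/((3247:ℝ)/1000 + 1)) + (81/2048 * (1/((4247:ℝ)/1000 + 1)) +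
      (-81/10240 * (1/((5247:ℝ)/1000 + 1)) + 243/71680 * (1/((6247:ℝ)/1000 + 1)))))))) := by
    norm_num
  have hJ : (4:ℝ)/3 < ∫ u in (0:ℝ)..1, Qpoly u * (1 - u) ^ (-(753/1000 : ℝ)) := by
    rw [hflip, hcongr, hval]
    exact hnum
  linarith
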